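/- arXiv:1406.3361 — 3 statements merged into one kernel-verified Lean document; each statement's English description precedes it below -/
import Mathlib

section
/- Let p ≥ 2 and fix k > 0. For all X, Y ∈ Sym⁺(p), every s > 0, and every R ∈ SO(p), the scaling–rotation distance satisfies d_SR(s·R X Rᵀ, s·R Y Rᵀ) = d_SR(X,Y). -/
open Matrix

/-- `p × p` real matrices. -/
abbrev Mat (p : ℕ) := Matrix (Fin p) (Fin p) ℝ

/-- `U ∈ SO(p)`: a rotation matrix. -/
def IsSO {p : ℕ} (U : Mat p) : Prop := U * Uᵀ = 1 ∧ U.det = 1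

/-- `D ∈ Diag⁺(p)`: diagonal with positive diagonal entries. -/
def IsDiagPos {p : ℕ} (D : Mat p) : Prop := D.IsDiag ∧ ∀ i, 0 < D i i

/-- Antisymmetric matrix. -/
def IsAntisym {p : ℕ} (A : Mat p) : Prop := Aᵀ = -A

/-- The permutation matrix `P⁰_π`: in column `j`, the entry `π j` equals 1. -/
def P0 {p : ℕ} (π : Equiv.Perm (Fin p)) : Mat p :=
  Matrix.of fun i j => if i = π j then (1 : ℝ) else 0

/-- `diag(−1,1,…,1)`. -/
def flipMat (p : ℕ) : Mat p :=
  Matrix.diagonal fun i => if (i : ℕ) = 0 then (-1 : ℝ) else 1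

open scoped Classical in
/-- `P_π`: the determinant-one modification of `P⁰_π`. -/
noncomputable def Pmat {p : ℕ} (π : Equiv.Perm (Fin p)) : Mat p :=
  if (P0 π).det = 1 then P0 π else flipMat p * P0 π

/-- `D_π := P_π D P_πᵀ`. -/
noncomputable def permDiag {p : ℕ} (π : Equiv.Perm (Fin p)) (D : Mat p) : Mat p :=
  Pmat π * D * (Pmat π)ᵀ

/-- The stabilizer group `G_D = {R ∈ SO(p) : R D Rᵀ = D}`. -/
def GD {p : ℕ} (D : Mat p) : Set (Mat p) := {R | IsSO R ∧ R * D * Rᵀ = D}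

/-- Squared Frobenius norm. -/
noncomputable def frobSq {p : ℕ} (A : Mat p) : ℝ := ∑ i, ∑ j, (A i j) ^ 2

/-- `d_SO(U,V)²`: the minimal value of `‖A‖_F²/2` over antisymmetric `A` with `exp A = V Uᵀ`. -/
noncomputable def dSOsq {p : ℕ} (U V : Mat p) : ℝ :=
  sInf {x | ∃ A : Mat p, IsAntisym A ∧ NormedSpace.exp A = V * Uᵀ ∧ x = frobSq A / 2}

/-- `d_𝒟(D,Λ)²`. -/
noncomputable def dDsq {p : ℕ} (D Λ : Mat p) : ℝ :=
  ∑ i, (Real.log (Λ i i) - Real.log (D i i)) ^ 2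

/-- The geodesic distance on `SO(p) × Diag⁺(p)` (with weight `k`). -/
noncomputable def gdist {p : ℕ} (k : ℝ) (a b : Mat p × Mat p) : ℝ :=
  Real.sqrt (k * dSOsq a.1 b.1 + dDsq a.2 b.2)

/-- `𝓔_X`: the set of versions (eigen-decompositions) of `X`. -/
def Versions {p : ℕ} (X : Mat p) : Set (Mat p × Mat p) :=
  {a | IsSO a.1 ∧ IsDiagPos a.2 ∧ a.1 * a.2 * a.1ᵀ = X}

/-- The scaling–rotation distance on `Sym⁺(p)`. -/
noncomputable def dSR {p : ℕ} (k : ℝ) (X Y : Mat p) : ℝ :=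
  sInf {x | ∃ a ∈ Versions X, ∃ b ∈ Versions Y, x = gdist k a b}

section Aux

lemma IsSO.transpose_mul {p : ℕ} {R : Mat p} (hR : IsSO R) : Rᵀ * R = 1 :=
  mul_eq_one_comm.mp hR.1

lemma IsSO.transpose {p : ℕ} {R : Mat p} (hR : IsSO R) : IsSO Rᵀ :=
  ⟨by rw [Matrix.transpose_transpose]; exact hR.transpose_mul, by rw [Matrix.det_transpose]; exact hR.2⟩

lemma IsSO.inv_eq {p : ℕ} {R : Mat p} (hR : IsSO R) : R⁻¹ = Rᵀ :=
  Matrix.inv_eq_right_inv hR.1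

lemma IsSO.isUnit {p : ℕ} {R : Mat p} (hR : IsSO R) : IsUnit R :=
  ⟨⟨R, Rᵀ, hR.1, hR.transpose_mul⟩, rfl⟩

lemma frobSq_conj {p : ℕ} {R : Mat p} (hR : IsSO R) (A : Mat p) :
    frobSq (R * A * Rᵀ) = frobSq A := by
  have key : ∀ B : Mat p, frobSq B = (B * Bᵀ).trace := by
    intro B
    simp [frobSq, Matrix.trace, Matrix.mul_apply, Matrix.transpose_apply, sq]
  rw [key, key]
  have : (R * A * Rᵀ) * (R * A * Rᵀ)ᵀ = R * (A * Aᵀ) * Rᵀ := by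
    simp only [Matrix.transpose_mul, Matrix.transpose_transpose, Matrix.mul_assoc]
    rw [← Matrix.mul_assoc Rᵀ R, hR.transpose_mul, Matrix.one_mul]
  rw [this, Matrix.trace_mul_cycle, ← Matrix.mul_assoc, hR.transpose_mul, Matrix.one_mul]

lemma dSOsq_conj {p : ℕ} {R : Mat p} (hR : IsSO R) (U V : Mat p) :
    dSOsq (R * U) (R * V) = dSOsq U V := by
  unfold dSOsq
  congr 1
  ext x
  constructor
  · rintro ⟨A, hA, hexp, rfl⟩
    refine ⟨Rᵀ * A * R, ?_, ?_, ?_⟩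
    · simp only [IsAntisym, Matrix.transpose_mul, Matrix.transpose_transpose,
        Matrix.mul_assoc]
      rw [show Aᵀ = -A from hA]
      simp [Matrix.mul_assoc]
    · have := Matrix.exp_conj Rᵀ A hR.transpose.isUnit
      rw [hR.transpose.inv_eq, Matrix.transpose_transpose] at this
      rw [this, hexp]
      rw [show Rᵀ * (R * V * (R * U)ᵀ) * R = (Rᵀ * R) * V * Uᵀ * (Rᵀ * R) by
        simp only [Matrix.transpose_mul]; noncomm_ring, hR.transpose_mul]
      simp [Matrix.mul_assoc]
    · have : Rᵀ * A * R = Rᵀ * A * Rᵀᵀ := by rw [Matrix.transpose_transpose]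
      rw [this, frobSq_conj hR.transpose]
  · rintro ⟨A, hA, hexp, rfl⟩
    refine ⟨R * A * Rᵀ, ?_, ?_, ?_⟩
    · simp only [IsAntisym, Matrix.transpose_mul, Matrix.transpose_transpose,
        Matrix.mul_assoc]
      rw [show Aᵀ = -A from hA]
      simp [Matrix.mul_assoc]
    · have := Matrix.exp_conj R A hR.isUnit
      rw [hR.inv_eq] at this
      rw [this, hexp]
      rw [show R * (V * Uᵀ) * Rᵀ = (R * V) * (R * U)ᵀ by
        simp only [Matrix.transpose_mul]; noncomm_ring]
    · rw [frobSq_conj hR]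

lemma dDsq_smul {p : ℕ} {s : ℝ} (hs : 0 < s) {D Λ : Mat p}
    (hD : ∀ i, 0 < D i i) (hΛ : ∀ i, 0 < Λ i i) :
    dDsq (s • D) (s • Λ) = dDsq D Λ := by
  unfold dDsq
  refine Finset.sum_congr rfl fun i _ => ?_
  have h1 : (s • D) i i = s * D i i := rfl
  have h2 : (s • Λ) i i = s * Λ i i := rfl
  rw [h1, h2, Real.log_mul (ne_of_gt hs) (ne_of_gt (hD i)),
    Real.log_mul (ne_of_gt hs) (ne_of_gt (hΛ i))]
  ring_nf

lemma versions_map {p : ℕ} {R : Mat p} (hR : IsSO R) {s : ℝ} (hs : 0 < s)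
    {X : Mat p} {a : Mat p × Mat p} (ha : a ∈ Versions X) :
    (R * a.1, s • a.2) ∈ Versions (s • (R * X * Rᵀ)) := by
  obtain ⟨hU, hD, hX⟩ := ha
  refine ⟨⟨?_, ?_⟩, ⟨?_, ?_⟩, ?_⟩
  · rw [Matrix.transpose_mul, show R * a.1 * (a.1ᵀ * Rᵀ) = R * (a.1 * a.1ᵀ) * Rᵀ by
      noncomm_ring, hU.1, Matrix.mul_one, hR.1]
  · rw [Matrix.det_mul, hU.2, hR.2, mul_one]
  · intro i j hij
    have := hD.1 hij
    simp [Matrix.smul_apply, this]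
  · intro i
    have := hD.2 i
    simpa [Matrix.smul_apply] using mul_pos hs this
  · rw [Matrix.transpose_mul, ← hX]
    rw [Matrix.mul_smul, Matrix.smul_mul]
    congr 1
    noncomm_ring

lemma gdist_invariant {p : ℕ} (k : ℝ) {R : Mat p} (hR : IsSO R) {s : ℝ} (hs : 0 < s)
    {a b : Mat p × Mat p} (hD : ∀ i, 0 < a.2 i i) (hΛ : ∀ i, 0 < b.2 i i) :
    gdist k (R * a.1, s • a.2) (R * b.1, s • b.2) = gdist k a b := by
  unfold gdist
  rw [dSOsq_conj hR, dDsq_smul hs hD hΛ]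

end Aux

/-- invariance of the scaling–rotation distance under simultaneous
uniform scaling and conjugation by a rotation matrix. -/
theorem dSR_scaling_rotation_invariant {p : ℕ} (hp : 2 ≤ p) (k : ℝ) (hk : 0 < k)
    (X Y : Mat p) (hX : X.PosDef) (hY : Y.PosDef)
    (s : ℝ) (hs : 0 < s) (R : Mat p) (hR : IsSO R) :
    dSR k (s • (R * X * Rᵀ)) (s • (R * Y * Rᵀ)) = dSR k X Y := by
  have key : ∀ (s : ℝ), 0 < s → ∀ (R : Mat p), IsSO R → ∀ (X Y : Mat p),
      {x | ∃ a ∈ Versions X, ∃ b ∈ Versions Y, x = gdist k a b} ⊆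
      {x | ∃ a ∈ Versions (s • (R * X * Rᵀ)), ∃ b ∈ Versions (s • (R * Y * Rᵀ)),
        x = gdist k a b} := by
    rintro s hs R hR X Y x ⟨a, ha, b, hb, rfl⟩
    refine ⟨(R * a.1, s • a.2), versions_map hR hs ha,
      (R * b.1, s • b.2), versions_map hR hs hb, ?_⟩
    exact (gdist_invariant k hR hs ha.2.1.2 hb.2.1.2).symm
  have hset : {x | ∃ a ∈ Versions (s • (R * X * Rᵀ)), ∃ b ∈ Versions (s • (R * Y * Rᵀ)),
      x = gdist k a b} = {x | ∃ a ∈ Versions X, ∃ b ∈ Versions Y, x = gdist k a b} := by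
    apply Set.Subset.antisymm
    · have h2 := key s⁻¹ (inv_pos.mpr hs) Rᵀ hR.transpose
        (s • (R * X * Rᵀ)) (s • (R * Y * Rᵀ))
      have hback : ∀ Z : Mat p, s⁻¹ • (Rᵀ * (s • (R * Z * Rᵀ)) * Rᵀᵀ) = Z := by
        intro Z
        rw [Matrix.transpose_transpose, Matrix.mul_smul, Matrix.smul_mul, smul_smul,
          inv_mul_cancel₀ (ne_of_gt hs), one_smul]
        rw [show Rᵀ * (R * Z * Rᵀ) * R = (Rᵀ * R) * Z * (Rᵀ * R) by noncomm_ring,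
          hR.transpose_mul, Matrix.one_mul, Matrix.mul_one]
      rw [hback X, hback Y] at h2
      exact h2
    · exact key s hs R hR X Y
  unfold dSR
  rw [hset]
end

section
/- Let p ≥ 2 and fix k > 0. Let X, Y ∈ Sym⁺(p) and suppose ((U,D),(V,Λ)) ∈ 𝓔_X × 𝓔_Y satisfies d((U,D),(V,Λ)) = d_SR(X,Y). Then for every permutation π of {1,…,p} and every R ∈ SO(p) with R D Rᵀ = D and R Λ Rᵀ = Λ, the pair ((U R P_πᵀ, D_π), (V R P_πᵀ, Λ_π)) belongs to 𝓔_X × 𝓔_Y and satisfies d((U R P_πᵀ, D_π), (V R P_πᵀ, Λ_π)) = d_SR(X,Y). -/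
open Matrix

/- ---------- auxiliary lemmas ---------- -/

lemma P0_mul_apply {p : ℕ} (π : Equiv.Perm (Fin p)) (M : Mat p) (i j : Fin p) :
    (P0 π * M) i j = M (π⁻¹ i) j := by
  rw [Matrix.mul_apply]
  rw [Finset.sum_eq_single (π⁻¹ i)]
  · simp [P0]
  · intro b _ hb
    have : i ≠ π b := by
      intro h; exact hb (by simp [h])
    simp [P0, this]
  · simp

lemma mul_P0T_apply {p : ℕ} (π : Equiv.Perm (Fin p)) (M : Mat p) (i j : Fin p) :
    (M * (P0 π)ᵀ) i j = M i (π⁻¹ j) := by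
  rw [Matrix.mul_apply]
  rw [Finset.sum_eq_single (π⁻¹ j)]
  · simp [P0]
  · intro b _ hb
    have : j ≠ π b := by
      intro h; exact hb (by simp [h])
    simp [P0, this]
  · simp

lemma P0_mul_transpose {p : ℕ} (π : Equiv.Perm (Fin p)) : P0 π * (P0 π)ᵀ = 1 := by
  ext i j
  rw [mul_P0T_apply]
  simp [P0, Matrix.one_apply, Equiv.eq_symm_apply]

lemma flip_sq (p : ℕ) : flipMat p * flipMat p = 1 := by
  rw [flipMat, Matrix.diagonal_mul_diagonal]
  have : (fun i : Fin p => (if (i : ℕ) = 0 then (-1:ℝ) else 1) * (if (i : ℕ) = 0 then (-1:ℝ) else 1)) = fun _ => (1:ℝ) := by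
    funext i
    by_cases h : (i : ℕ) = 0 <;> simp [h]
  rw [this, Matrix.diagonal_one]

lemma flip_transpose (p : ℕ) : (flipMat p)ᵀ = flipMat p := Matrix.diagonal_transpose _

lemma flip_det {p : ℕ} (hp : 0 < p) : (flipMat p).det = -1 := by
  rw [flipMat, Matrix.det_diagonal]
  rw [Finset.prod_eq_single (⟨0, hp⟩ : Fin p)]
  · simp
  · intro b _ hb
    have : (b : ℕ) ≠ 0 := by
      intro h; exact hb (by simp [Fin.ext_iff, h])
    simp [this]
  · simp

lemma Pmat_mul_transpose {p : ℕ} (π : Equiv.Perm (Fin p)) :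
    Pmat π * (Pmat π)ᵀ = 1 := by
  rw [Pmat]
  split
  · exact P0_mul_transpose π
  · rw [Matrix.transpose_mul, flip_transpose, Matrix.mul_assoc,
      ← Matrix.mul_assoc (P0 π), P0_mul_transpose, Matrix.one_mul, flip_sq]

lemma Pmat_det {p : ℕ} (hp : 0 < p) (π : Equiv.Perm (Fin p)) : (Pmat π).det = 1 := by
  have hsq : (P0 π).det * (P0 π).det = 1 := by
    have := congrArg Matrix.det (P0_mul_transpose π)
    rwa [Matrix.det_mul, Matrix.det_transpose, Matrix.det_one] at this
  rw [Pmat]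
  split
  · assumption
  · rename_i h
    have : (P0 π).det = -1 := by
      rcases mul_self_eq_one_iff.mp hsq with h1 | h1
      · exact absurd h1 h
      · exact h1
    rw [Matrix.det_mul, flip_det hp, this]; ring

lemma Pmat_IsSO {p : ℕ} (hp : 0 < p) (π : Equiv.Perm (Fin p)) : IsSO (Pmat π) :=
  ⟨Pmat_mul_transpose π, Pmat_det hp π⟩

lemma IsSO.transpose_s13 {p : ℕ} {M : Mat p} (h : IsSO M) : IsSO Mᵀ := by
  refine ⟨?_, by rw [Matrix.det_transpose]; exact h.2⟩
  rw [Matrix.transpose_transpose]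
  exact mul_eq_one_comm.mp h.1

lemma IsSO.mul {p : ℕ} {M N : Mat p} (hM : IsSO M) (hN : IsSO N) : IsSO (M * N) := by
  refine ⟨?_, by rw [Matrix.det_mul, hM.2, hN.2, mul_one]⟩
  rw [Matrix.transpose_mul, Matrix.mul_assoc, ← Matrix.mul_assoc N, hN.1,
    Matrix.one_mul, hM.1]

lemma permDiag_eq {p : ℕ} (π : Equiv.Perm (Fin p)) (D : Mat p) (hD : D.IsDiag) :
    permDiag π D = Matrix.diagonal (fun i => D (π⁻¹ i) (π⁻¹ i)) := by
  have base : P0 π * D * (P0 π)ᵀ = Matrix.diagonal (fun i => D (π⁻¹ i) (π⁻¹ i)) := by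
    ext i j
    rw [mul_P0T_apply, P0_mul_apply]
    by_cases h : i = j
    · simp [h]
    · have : π⁻¹ i ≠ π⁻¹ j := fun hc => h (by simpa using congrArg π hc)
      rw [hD this, Matrix.diagonal_apply_ne _ h]
  rw [permDiag, Pmat]
  split
  · exact base
  · rw [Matrix.transpose_mul, flip_transpose]
    have : flipMat p * P0 π * D * ((P0 π)ᵀ * flipMat p)
        = flipMat p * (P0 π * D * (P0 π)ᵀ) * flipMat p := by
      simp only [Matrix.mul_assoc]
    rw [this, base, flipMat, Matrix.diagonal_mul_diagonal, Matrix.diagonal_mul_diagonal]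
    apply congrArg
    funext i
    by_cases h : (i : ℕ) = 0 <;> simp [h] <;> ring

lemma IsDiagPos_permDiag {p : ℕ} (π : Equiv.Perm (Fin p)) {D : Mat p}
    (hD : IsDiagPos D) : IsDiagPos (permDiag π D) := by
  rw [permDiag_eq π D hD.1]
  exact ⟨Matrix.isDiag_diagonal _, fun i => by simpa using hD.2 (π⁻¹ i)⟩

/-- equivalence of minimal pairs under simultaneous rotation and
permutation. -/
theorem minimal_pair_equivalence {p : ℕ} (hp : 2 ≤ p) (k : ℝ) (hk : 0 < k)
    (X Y : Mat p) (hX : X.PosDef) (hY : Y.PosDef)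
    (U D V Λ : Mat p) (hUD : (U, D) ∈ Versions X) (hVL : (V, Λ) ∈ Versions Y)
    (hmin : gdist k (U, D) (V, Λ) = dSR k X Y)
    (π : Equiv.Perm (Fin p)) (R : Mat p) (hR : IsSO R)
    (hRD : R * D * Rᵀ = D) (hRΛ : R * Λ * Rᵀ = Λ) :
    (U * R * (Pmat π)ᵀ, permDiag π D) ∈ Versions X ∧
    (V * R * (Pmat π)ᵀ, permDiag π Λ) ∈ Versions Y ∧
    gdist k (U * R * (Pmat π)ᵀ, permDiag π D) (V * R * (Pmat π)ᵀ, permDiag π Λ)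
      = dSR k X Y := by
  have hp0 : 0 < p := lt_of_lt_of_le two_pos hp
  obtain ⟨hUSO, hDpos, hUDX⟩ := hUD
  obtain ⟨hVSO, hΛpos, hVLY⟩ := hVL
  have hPSO := Pmat_IsSO hp0 π
  have hPtP : (Pmat π)ᵀ * Pmat π = 1 := mul_eq_one_comm.mp (Pmat_mul_transpose π)
  have hRtR : Rᵀ * R = 1 := mul_eq_one_comm.mp hR.1
  have cancelP : ∀ M : Mat p, (Pmat π)ᵀ * (Pmat π * M) = M := fun M => by
    rw [← Matrix.mul_assoc, hPtP, Matrix.one_mul]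
  -- the key conjugation computation
  have key : ∀ W Δ : Mat p, W * Δ * Wᵀ = W * Δ * Wᵀ → (W * R * (Pmat π)ᵀ) * permDiag π Δ
      * (W * R * (Pmat π)ᵀ)ᵀ = W * (R * Δ * Rᵀ) * Wᵀ := by
    intro W Δ _
    rw [permDiag]
    simp only [Matrix.transpose_mul, Matrix.transpose_transpose, Matrix.mul_assoc]
    rw [cancelP, cancelP]
  have hXnew : (U * R * (Pmat π)ᵀ) * permDiag π D * (U * R * (Pmat π)ᵀ)ᵀ = X := by
    rw [key U D rfl, hRD, hUDX]
  have hYnew : (V * R * (Pmat π)ᵀ) * permDiag π Λ * (V * R * (Pmat π)ᵀ)ᵀ = Y := by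
    rw [key V Λ rfl, hRΛ, hVLY]
  have hUso : IsSO (U * R * (Pmat π)ᵀ) := (hUSO.mul hR).mul hPSO.transpose_s13
  have hVso : IsSO (V * R * (Pmat π)ᵀ) := (hVSO.mul hR).mul hPSO.transpose_s13
  refine ⟨⟨hUso, IsDiagPos_permDiag π hDpos, hXnew⟩,
    ⟨hVso, IsDiagPos_permDiag π hΛpos, hYnew⟩, ?_⟩
  rw [← hmin]
  -- gdist equality
  have hSO : dSOsq (U * R * (Pmat π)ᵀ) (V * R * (Pmat π)ᵀ) = dSOsq U V := by
    have : (V * R * (Pmat π)ᵀ) * (U * R * (Pmat π)ᵀ)ᵀ = V * Uᵀ := by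
      simp only [Matrix.transpose_mul, Matrix.transpose_transpose, Matrix.mul_assoc]
      rw [cancelP]
      rw [← Matrix.mul_assoc R Rᵀ, hR.1, Matrix.one_mul]
    rw [dSOsq, dSOsq, this]
  have hD' : ∀ Δ : Mat p, Δ.IsDiag → ∀ i, permDiag π Δ i i = Δ (π⁻¹ i) (π⁻¹ i) := by
    intro Δ hΔ i
    rw [permDiag_eq π Δ hΔ, Matrix.diagonal_apply_eq]
  have hDd : dDsq (permDiag π D) (permDiag π Λ) = dDsq D Λ := by
    rw [dDsq, dDsq]
    rw [← Equiv.sum_comp (π⁻¹ : Equiv.Perm (Fin p))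
      (fun i => (Real.log (Λ i i) - Real.log (D i i)) ^ 2)]
    exact Finset.sum_congr rfl fun i _ => by
      rw [hD' D hDpos.1, hD' Λ hΛpos.1]
  rw [gdist, gdist]
  simp only
  rw [hSO, hDd]
end

section
/- Fix k > 0 and let X = d₁·I₃ ∈ Sym⁺(3) for some d₁ > 0 (all three eigenvalues of X equal to d₁, so D = d₁·I₃). Then for any version (V,Λ) of Y ∈ Sym⁺(3), one has d_SR(X,Y) = d((V, d₁·I₃), (V,Λ)) = d_𝒟(d₁·I₃, Λ), regardless of whether the eigenvalues of Y are distinct or not. -/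
open Matrix

section Auxiliary

open Polynomial

private lemma frobSq_nonneg {p : ℕ} (A : Mat p) : 0 ≤ frobSq A :=
  Finset.sum_nonneg fun _ _ => Finset.sum_nonneg fun _ _ => sq_nonneg _

private lemma dSOsq_nonneg {p : ℕ} (U V : Mat p) : 0 ≤ dSOsq U V := by
  apply Real.sInf_nonneg
  rintro x ⟨A, -, -, rfl⟩
  have := frobSq_nonneg A
  linarith

private lemma det_conj {p : ℕ} (W B : Mat p) (hW : W * Wᵀ = 1) (hdet : W.det = 1) :
    (W * B * Wᵀ).det = B.det := by
  rw [Matrix.det_mul, Matrix.det_mul, Matrix.det_transpose, hdet, one_mul, mul_one]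

private lemma conj_smul_sub {p : ℕ} (W B : Mat p) (hW : W * Wᵀ = 1) (t : ℝ) :
    W * (t • (1 : Mat p) - B) * Wᵀ = t • (1 : Mat p) - W * B * Wᵀ := by
  rw [Matrix.mul_sub, Matrix.sub_mul, Matrix.mul_smul, Matrix.mul_one, Matrix.smul_mul, hW]

private lemma det_smul_one_sub_diag (M : Mat 3) (hM : M.IsDiag) (t : ℝ) :
    (t • (1 : Mat 3) - M).det = ∏ i, (t - M i i) := by
  have h01 := hM (show (0 : Fin 3) ≠ 1 by decide)
  have h02 := hM (show (0 : Fin 3) ≠ 2 by decide)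
  have h10 := hM (show (1 : Fin 3) ≠ 0 by decide)
  have h12 := hM (show (1 : Fin 3) ≠ 2 by decide)
  have h20 := hM (show (2 : Fin 3) ≠ 0 by decide)
  have h21 := hM (show (2 : Fin 3) ≠ 1 by decide)
  rw [Matrix.det_fin_three, Fin.prod_univ_three]
  simp only [Matrix.sub_apply, Matrix.smul_apply, Matrix.one_apply, smul_eq_mul]
  norm_num [h01, h02, h10, h12, h20, h21, show ¬((2:Fin 3) = 1) from by decide,
    show ¬((2:Fin 3) = 0) from by decide, show ¬((1:Fin 3) = 2) from by decide,
    show ¬((0:Fin 3) = 2) from by decide, show ¬((1:Fin 3) = 0) from by decide,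
    show ¬((0:Fin 3) = 1) from by decide]

private lemma multiset_diag_eq (m l : Fin 3 → ℝ)
    (h : ∀ t : ℝ, ∏ i, (t - m i) = ∏ i, (t - l i)) :
    Finset.univ.val.map m = Finset.univ.val.map l := by
  have key : ∀ f : Fin 3 → ℝ, ∀ t : ℝ,
      (((Finset.univ.val.map f).map fun a => X - C a).prod).eval t = ∏ i, (t - f i) := by
    intro f t
    rw [Multiset.map_map, Polynomial.eval_multiset_prod, Multiset.map_map,
      ← Finset.prod_eq_multiset_prod]
    simp
  have hp : ((Finset.univ.val.map m).map fun a => X - C a).prod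
      = ((Finset.univ.val.map l).map fun a => X - C a).prod := by
    apply Polynomial.funext
    intro t
    rw [key, key]
    exact h t
  have := congrArg Polynomial.roots hp
  rwa [Polynomial.roots_multiset_prod_X_sub_C, Polynomial.roots_multiset_prod_X_sub_C] at this

private lemma sum_diag_eq (m l : Fin 3 → ℝ) (g : ℝ → ℝ)
    (h : Finset.univ.val.map m = Finset.univ.val.map l) :
    ∑ i, g (m i) = ∑ i, g (l i) := by
  rw [Finset.sum_eq_multiset_sum, Finset.sum_eq_multiset_sum,
    show (Finset.univ.val.map fun i => g (m i)) = (Finset.univ.val.map m).map g from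
      (Multiset.map_map g m _).symm,
    show (Finset.univ.val.map fun i => g (l i)) = (Finset.univ.val.map l).map g from
      (Multiset.map_map g l _).symm, h]

end Auxiliary

/-- scaling–rotation distance from an isotropic `3 × 3` SPD matrix. -/
theorem dSR_three_by_three_isotropic {k : ℝ} (hk : 0 < k)
    (d₁ : ℝ) (hd₁ : 0 < d₁) (Y : Mat 3) (hY : Y.PosDef)
    (V Λ : Mat 3) (hVL : (V, Λ) ∈ Versions Y) :
    dSR k (d₁ • (1 : Mat 3)) Y = gdist k (V, d₁ • (1 : Mat 3)) (V, Λ) ∧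
    gdist k (V, d₁ • (1 : Mat 3)) (V, Λ) = Real.sqrt (dDsq (d₁ • (1 : Mat 3)) Λ) := by
  obtain ⟨hV, hΛ, hVLY⟩ := hVL
  have hdiagd : ∀ i : Fin 3, (d₁ • (1 : Mat 3)) i i = d₁ := by
    intro i
    simp [Matrix.smul_apply, Matrix.one_apply_eq]
  -- dSOsq V V = 0
  have hso : dSOsq V V = 0 := by
    have h0 : (0 : ℝ) ∈ {x | ∃ A : Mat 3, IsAntisym A ∧ NormedSpace.exp A = V * Vᵀ ∧
        x = frobSq A / 2} := by
      refine ⟨0, ?_, ?_, ?_⟩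
      · simp [IsAntisym]
      · rw [NormedSpace.exp_zero, hV.1]
      · simp [frobSq]
    refine le_antisymm (csInf_le ⟨0, ?_⟩ h0) (Real.sInf_nonneg ?_) <;>
    · rintro x ⟨A, -, -, rfl⟩
      have := frobSq_nonneg A
      linarith
  have hgV : gdist k (V, d₁ • (1 : Mat 3)) (V, Λ) = Real.sqrt (dDsq (d₁ • (1 : Mat 3)) Λ) := by
    simp [gdist, hso]
  -- (V, d₁ • 1) is a version of d₁ • 1
  have hmemX : (V, d₁ • (1 : Mat 3)) ∈ Versions (d₁ • (1 : Mat 3)) := by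
    refine ⟨hV, ⟨?_, ?_⟩, ?_⟩
    · intro i j hij
      simp [Matrix.smul_apply, Matrix.one_apply_ne hij]
    · intro i
      show 0 < (d₁ • (1 : Mat 3)) i i
      rw [hdiagd i]; exact hd₁
    · rw [Matrix.mul_smul, Matrix.mul_one, Matrix.smul_mul, hV.1]
  have hmem : gdist k (V, d₁ • (1 : Mat 3)) (V, Λ)
      ∈ {x | ∃ a ∈ Versions (d₁ • (1 : Mat 3)), ∃ b ∈ Versions Y, x = gdist k a b} :=
    ⟨(V, d₁ • (1 : Mat 3)), hmemX, (V, Λ), ⟨hV, hΛ, hVLY⟩, rfl⟩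
  -- lower bound
  have key : ∀ x ∈ {x | ∃ a ∈ Versions (d₁ • (1 : Mat 3)), ∃ b ∈ Versions Y, x = gdist k a b},
      Real.sqrt (dDsq (d₁ • (1 : Mat 3)) Λ) ≤ x := by
    rintro x ⟨⟨U, D⟩, ⟨hU, hD, hUD⟩, ⟨W, M⟩, ⟨hW, hM, hWM⟩, rfl⟩
    have hUtU : Uᵀ * U = 1 := mul_eq_one_comm.mp hU.1
    have hDeq : D = d₁ • (1 : Mat 3) := by
      have h1 : Uᵀ * (U * D * Uᵀ) * U = D := by
        calc Uᵀ * (U * D * Uᵀ) * U = (Uᵀ * U) * D * (Uᵀ * U) := by simp only [mul_assoc]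
          _ = D := by rw [hUtU, one_mul, mul_one]
      rw [← h1, hUD, Matrix.mul_smul, Matrix.mul_one, Matrix.smul_mul, hUtU]
    -- equal characteristic polynomials
    have hpoly : ∀ t : ℝ, ∏ i, (t - M i i) = ∏ i, (t - Λ i i) := by
      intro t
      have e1 : (t • (1 : Mat 3) - Y).det = ∏ i, (t - M i i) := by
        rw [← hWM, ← conj_smul_sub W M hW.1 t, det_conj _ _ hW.1 hW.2,
          det_smul_one_sub_diag M hM.1]
      have e2 : (t • (1 : Mat 3) - Y).det = ∏ i, (t - Λ i i) := by
        rw [← hVLY, ← conj_smul_sub V Λ hV.1 t, det_conj _ _ hV.1 hV.2,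
          det_smul_one_sub_diag Λ hΛ.1]
      rw [← e1, e2]
    have hsum : dDsq D M = dDsq (d₁ • (1 : Mat 3)) Λ := by
      have hmm := multiset_diag_eq (fun i => M i i) (fun i => Λ i i) hpoly
      have := sum_diag_eq (fun i => M i i) (fun i => Λ i i)
        (fun x => (Real.log x - Real.log d₁) ^ 2) hmm
      unfold dDsq
      rw [hDeq]
      simpa only [hdiagd] using this
    unfold gdist
    simp only
    rw [hsum]
    apply Real.sqrt_le_sqrt
    have := dSOsq_nonneg U W
    nlinarith
  refine ⟨le_antisymm ?_ ?_, hgV⟩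
  · exact csInf_le ⟨0, fun x hx => by
      obtain ⟨a, -, b, -, rfl⟩ := hx
      exact Real.sqrt_nonneg _⟩ hmem
  · rw [hgV]
    exact le_csInf ⟨_, hmem⟩ key
end
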